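/- (Theorem 8, positive part.) Let Q ⊆ ℂⁿ be a complete circular domain centered at 0, i.e. an open set containing 0 such that z ∈ Q and t ∈ ℂ with |t| ≤ 1 implies t·z ∈ Q. Suppose f : Q → ℂ satisfies f(z) = Σ_{k=0}^∞ P_k(z) for all z ∈ Q, where each P_k : ℂⁿ → ℂ is a homogeneous polynomial of degree k and the series converges pointwise on Q, and suppose |f(z)| < 1 for all z ∈ Q. Then Σ_{k=0}^∞ |P_k(z)| < 1 for every z in the homothetic domain (1/3)·Q = {w/3 : w ∈ Q}. -/

import Mathlib

open Metric Complex Finset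

lemma mobius_lt {a w : ℂ} (ha : ‖a‖ < 1) (hw : ‖w‖ < 1) :
    ‖(w - a) / (1 - (starRingEnd ℂ) a * w)‖ < 1 := by
  have key : Complex.normSq (1 - (starRingEnd ℂ) a * w) - Complex.normSq (w - a)
      = (1 - Complex.normSq a) * (1 - Complex.normSq w) := by
    simp only [Complex.normSq_apply, Complex.sub_re, Complex.sub_im, Complex.mul_re,
      Complex.mul_im, Complex.one_re, Complex.one_im, Complex.conj_re, Complex.conj_im]
    ring
  have ha2 : Complex.normSq a < 1 := by
    have := Complex.sq_norm a
    nlinarith [norm_nonneg a]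
  have hw2 : Complex.normSq w < 1 := by
    have := Complex.sq_norm w
    nlinarith [norm_nonneg w]
  have hpos : 0 < (1 - Complex.normSq a) * (1 - Complex.normSq w) := by nlinarith
  have hden : Complex.normSq (w - a) < Complex.normSq (1 - (starRingEnd ℂ) a * w) := by
    nlinarith
  have h1 : ‖w - a‖ ^ 2 < ‖1 - (starRingEnd ℂ) a * w‖ ^ 2 := by
    rw [Complex.sq_norm, Complex.sq_norm]
    exact hden
  have hdn : (0:ℝ) < ‖1 - (starRingEnd ℂ) a * w‖ := by
    nlinarith [norm_nonneg (w - a), norm_nonneg (1 - (starRingEnd ℂ) a * w),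
      sq_nonneg (‖w - a‖)]
  rw [norm_div, div_lt_one hdn]
  nlinarith [norm_nonneg (w - a), norm_nonneg (1 - (starRingEnd ℂ) a * w)]

lemma schwarz_pick_zero (φ : ℂ → ℂ) (hd : DifferentiableOn ℂ φ (ball 0 1))
    (hm : ∀ z ∈ ball (0:ℂ) 1, ‖φ z‖ < 1) :
    ‖deriv φ 0‖ ≤ 1 - ‖φ 0‖ ^ 2 := by
  have h0 : (0:ℂ) ∈ ball (0:ℂ) 1 := by simp
  set a := φ 0 with ha_def
  have ha : ‖a‖ < 1 := hm 0 h0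
  have hden : ∀ z ∈ ball (0:ℂ) 1, (1 - (starRingEnd ℂ) a * φ z) ≠ 0 := by
    intro z hz h
    have h1 : ‖(starRingEnd ℂ) a * φ z‖ < 1 := by
      rw [norm_mul, RCLike.norm_conj]
      calc ‖a‖ * ‖φ z‖ ≤ 1 * ‖φ z‖ := by
            exact mul_le_mul_of_nonneg_right ha.le (norm_nonneg _)
        _ = ‖φ z‖ := one_mul _
        _ < 1 := hm z hz
    have : (starRingEnd ℂ) a * φ z = 1 := by linear_combination -h
    rw [this] at h1; simp at h1
  set ψ : ℂ → ℂ := fun z => (φ z - a) / (1 - (starRingEnd ℂ) a * φ z) with hψ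
  have hψd : DifferentiableOn ℂ ψ (ball 0 1) := by
    apply DifferentiableOn.div
    · exact hd.sub (differentiableOn_const a)
    · exact (differentiableOn_const 1).sub ((differentiableOn_const _).mul hd)
    · exact hden
  have hψ0 : ψ 0 = 0 := by simp [hψ, ha_def]
  have hmaps : Set.MapsTo ψ (ball 0 1) (ball (ψ 0) 1) := by
    intro z hz
    rw [hψ0]
    have := mobius_lt ha (hm z hz)
    simpa [hψ, mem_ball, dist_eq_norm] using this
  have hSch : ‖deriv ψ 0‖ ≤ 1 / 1 :=
    Complex.norm_deriv_le_div_of_mapsTo_ball hψd (hmaps.mono_right ball_subset_closedBall) one_pos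
  -- compute deriv ψ 0
  have hφ0 : HasDerivAt φ (deriv φ 0) 0 := by
    have := (hd.differentiableAt (isOpen_ball.mem_nhds h0))
    exact this.hasDerivAt
  have hN : HasDerivAt (fun z => φ z - a) (deriv φ 0) 0 := hφ0.sub_const a
  have hD : HasDerivAt (fun z => 1 - (starRingEnd ℂ) a * φ z)
      (-((starRingEnd ℂ) a * deriv φ 0)) 0 := by
    simpa using ((hφ0.const_mul ((starRingEnd ℂ) a)).const_sub 1)
  have hd0 : (1 - (starRingEnd ℂ) a * φ 0) ≠ 0 := hden 0 h0
  have hquot := hN.div hD hd0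
  have hderivψ : deriv ψ 0
      = deriv φ 0 / (1 - (starRingEnd ℂ) a * a) := by
    rw [show ψ = ((fun z => φ z - a) / fun z => 1 - (starRingEnd ℂ) a * φ z) from rfl, hquot.deriv, ← ha_def]
    have hd0' : 1 - (starRingEnd ℂ) a * a ≠ 0 := hd0
    field_simp
    ring
  have hval : 1 - (starRingEnd ℂ) a * a = ((1 - Complex.normSq a : ℝ) : ℂ) := by
    have := Complex.normSq_eq_conj_mul_self (z := a)
    push_cast [this]
    ring
  have hnorm : ‖deriv ψ 0‖ = ‖deriv φ 0‖ / (1 - Complex.normSq a) := by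
    rw [hderivψ, norm_div, hval, Complex.norm_real, Real.norm_eq_abs, abs_of_pos]
    have : Complex.normSq a < 1 := by
      rw [← Complex.sq_norm] at *
      nlinarith [norm_nonneg a, ha]
    linarith
  have hns : Complex.normSq a = ‖a‖ ^ 2 := by
    rw [Complex.sq_norm]
  have hpos : 0 < 1 - ‖a‖ ^ 2 := by nlinarith [norm_nonneg a]
  rw [hnorm, hns] at hSch
  rw [div_le_div_iff₀ hpos one_pos] at hSch
  linarith

lemma rotation_avg (c : ℕ → ℂ) (g : ℂ → ℂ)
    (hs : ∀ t : ℂ, ‖t‖ ≤ 1 → HasSum (fun m => c m * t ^ m) (g t))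
    (hb : ∀ t : ℂ, ‖t‖ ≤ 1 → ‖g t‖ < 1)
    (k : ℕ) (hk : 1 ≤ k) :
    ∀ s : ℂ, ‖s‖ ≤ 1 → ∃ v : ℂ, HasSum (fun m => c (m * k) * s ^ m) v ∧ ‖v‖ < 1 := by
  intro s hsle
  -- k-th root of s
  obtain ⟨z, hz⟩ := IsAlgClosed.exists_pow_nat_eq s (n := k) (by omega)
  have hzle : ‖z‖ ≤ 1 := by
    by_contra h
    push_neg at h
    have : 1 < ‖z‖ ^ k := one_lt_pow₀ h (by omega)
    rw [← norm_pow, hz] at this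
    linarith
  -- primitive root
  have hk0 : (k : ℕ) ≠ 0 := by omega
  set ζ : ℂ := Complex.exp (2 * Real.pi * Complex.I / k) with hζ
  have hprim : IsPrimitiveRoot ζ k := Complex.isPrimitiveRoot_exp k hk0
  have hζk : ζ ^ k = 1 := hprim.pow_eq_one
  have hζnorm : ‖ζ‖ = 1 := by
    have h1 : ‖ζ‖ ^ k = 1 := by rw [← norm_pow, hζk, norm_one]
    rcases lt_trichotomy ‖ζ‖ 1 with h | h | h
    · exfalso
      have : ‖ζ‖ ^ k < 1 := pow_lt_one₀ (norm_nonneg _) h (by omega)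
      linarith
    · exact h
    · exfalso
      have : 1 < ‖ζ‖ ^ k := one_lt_pow₀ h (by omega)
      linarith
  -- sum over j
  have hj : ∀ j ∈ Finset.range k, HasSum (fun m => c m * (ζ ^ j * z) ^ m) (g (ζ ^ j * z)) := by
    intro j _
    apply hs
    rw [norm_mul, norm_pow, hζnorm, one_pow, one_mul]
    exact hzle
  have hsum1 : HasSum (fun m => ∑ j ∈ Finset.range k, c m * (ζ ^ j * z) ^ m)
      (∑ j ∈ Finset.range k, g (ζ ^ j * z)) := hasSum_sum fun j hj' => hj j hj'
  -- rewrite the inner finite sum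
  have hinner : ∀ m, ∑ j ∈ Finset.range k, c m * (ζ ^ j * z) ^ m
      = (if k ∣ m then (k : ℂ) * (c m * z ^ m) else 0) := by
    intro m
    have : ∀ j, c m * (ζ ^ j * z) ^ m = c m * z ^ m * ((ζ ^ m) ^ j) := by
      intro j
      rw [mul_pow, ← pow_mul, mul_comm j m, pow_mul]
      ring
    simp only [this, ← Finset.mul_sum]
    by_cases hdvd : k ∣ m
    · have : ζ ^ m = 1 := (hprim.pow_eq_one_iff_dvd m).mpr hdvd
      simp [this, hdvd]
      ring
    · have hne : ζ ^ m ≠ 1 := fun h => hdvd ((hprim.pow_eq_one_iff_dvd m).mp h)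
      rw [geom_sum_eq hne]
      have : (ζ ^ m) ^ k = 1 := by rw [← pow_mul, mul_comm, pow_mul, hζk, one_pow]
      rw [this]
      simp [hdvd]
  rw [funext hinner] at hsum1
  -- restrict to multiples of k
  have hinj : Function.Injective (fun m : ℕ => m * k) := fun a b h => by
    simpa [Nat.mul_left_inj hk0] using h
  have hsupp : ∀ m ∉ Set.range (fun m : ℕ => m * k),
      (if k ∣ m then (k : ℂ) * (c m * z ^ m) else 0) = 0 := by
    intro m hm
    rw [if_neg]
    intro ⟨q, hq⟩
    exact hm ⟨q, by simp only [mul_comm]; omega⟩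
  have hsum2 : HasSum (fun m : ℕ => (k : ℂ) * (c (m * k) * z ^ (m * k)))
      (∑ j ∈ Finset.range k, g (ζ ^ j * z)) := by
    have := (hinj.hasSum_iff hsupp).mpr hsum1
    refine this.congr_fun fun m => ?_
    simp [Dvd.intro m rfl]
  have hkC : (k : ℂ) ≠ 0 := Nat.cast_ne_zero.mpr hk0
  have hsum3 : HasSum (fun m : ℕ => c (m * k) * s ^ m)
      ((∑ j ∈ Finset.range k, g (ζ ^ j * z)) / k) := by
    have := hsum2.div_const (k : ℂ)
    refine this.congr_fun fun m => ?_
    rw [mul_comm m k, pow_mul, hz]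
    field_simp
  refine ⟨_, hsum3, ?_⟩
  rw [norm_div, Complex.norm_natCast]
  rw [div_lt_one (by positivity)]
  calc ‖∑ j ∈ Finset.range k, g (ζ ^ j * z)‖ ≤ ∑ j ∈ Finset.range k, ‖g (ζ ^ j * z)‖ :=
        norm_sum_le _ _
    _ < ∑ j ∈ Finset.range k, 1 := by
        apply Finset.sum_lt_sum_of_nonempty ⟨0, Finset.mem_range.mpr (by omega)⟩
        intro j _
        apply hb
        rw [norm_mul, norm_pow, hζnorm, one_pow, one_mul]
        exact hzle
    _ = k := by simp

lemma wiener_bound (c : ℕ → ℂ) (g : ℂ → ℂ)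
    (hs : ∀ t : ℂ, ‖t‖ ≤ 1 → HasSum (fun m => c m * t ^ m) (g t))
    (hb : ∀ t : ℂ, ‖t‖ ≤ 1 → ‖g t‖ < 1)
    (k : ℕ) (hk : 1 ≤ k) :
    ‖c k‖ ≤ 1 - ‖c 0‖ ^ 2 := by
  classical
  set d : ℕ → ℂ := fun m => c (m * k) with hd_def
  set φ : ℂ → ℂ := fun s => ∑' m, d m * s ^ m with hφ_def
  have key : ∀ s : ℂ, ‖s‖ ≤ 1 → HasSum (fun m => d m * s ^ m) (φ s) ∧ ‖φ s‖ < 1 := by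
    intro s hs1
    obtain ⟨v, hv, hvlt⟩ := rotation_avg c g hs hb k hk s hs1
    have hφs : φ s = v := hv.tsum_eq
    rw [hφs]
    exact ⟨hv, hvlt⟩
  set p : FormalMultilinearSeries ℂ ℂ ℂ := FormalMultilinearSeries.ofScalars ℂ d with hp_def
  have hp_apply : ∀ (y : ℂ) (n : ℕ), (p n fun _ => y) = d n * y ^ n := by
    intro y n
    rw [hp_def, FormalMultilinearSeries.ofScalars_apply_eq, smul_eq_mul]
  have hrad : 1 ≤ p.radius := by
    have h1 : Summable (fun m => d m * (1:ℂ) ^ m) := (key 1 (by norm_num)).1.summable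
    have h2 : Filter.Tendsto (fun m => ‖d m‖) Filter.atTop (nhds 0) := by
      have := h1.tendsto_atTop_zero
      simpa using this.norm
    have heq : (fun n => ‖p n‖ * ((1:NNReal):ℝ) ^ n) = fun n => ‖d n‖ := by
      funext n
      rw [hp_def, FormalMultilinearSeries.ofScalars_norm]; norm_num
    have := p.le_radius_of_tendsto (r := 1) (l := 0) (by rw [heq]; exact h2)
    simpa using this
  have hball : HasFPowerSeriesOnBall φ p 0 1 :=
    { r_le := hrad
      r_pos := by norm_num
      hasSum := by
        intro y hy
        rw [mem_emetric_ball_zero_iff] at hy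
        have hy1 : ‖y‖ < 1 := by rw [enorm_eq_nnnorm] at hy; exact_mod_cast hy
        have := (key y hy1.le).1
        simpa [hp_apply] using this }
  have hsub : ball (0:ℂ) 1 ⊆ Metric.eball 0 1 := by
    intro y hy
    rw [mem_emetric_ball_zero_iff]
    rw [mem_ball_zero_iff] at hy
    rw [enorm_eq_nnnorm]; exact_mod_cast hy
  have hdiff : DifferentiableOn ℂ φ (ball 0 1) :=
    (hball.differentiableOn).mono hsub
  have hφ0 : φ 0 = c 0 := by
    have h1 := (key 0 (by norm_num)).1
    have h2 : HasSum (fun m => d m * (0:ℂ) ^ m) (d 0) := by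
      convert hasSum_single (f := fun m => d m * (0:ℂ) ^ m) 0 ?_ using 1
      · simp
      · intro b hb'
        simp [pow_eq_zero_iff, hb']
    have := h1.unique h2
    rw [this, hd_def]
    simp
  have hderiv : deriv φ 0 = c k := by
    have := hball.hasFPowerSeriesAt.deriv
    rw [this, hp_apply]
    simp [hd_def]
  have hm : ∀ z ∈ ball (0:ℂ) 1, ‖φ z‖ < 1 := by
    intro z hz
    rw [mem_ball_zero_iff] at hz
    exact (key z hz.le).2
  have := schwarz_pick_zero φ hdiff hm
  rw [hderiv, hφ0] at this
  exact this

lemma bohr_scalar (c : ℕ → ℂ) (g : ℂ → ℂ)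
    (hs : ∀ t : ℂ, ‖t‖ ≤ 1 → HasSum (fun m => c m * t ^ m) (g t))
    (hb : ∀ t : ℂ, ‖t‖ ≤ 1 → ‖g t‖ < 1) :
    Summable (fun k => ‖c k‖ * (3:ℝ)⁻¹ ^ k) ∧ ∑' k, ‖c k‖ * (3:ℝ)⁻¹ ^ k < 1 := by
  have ha : ‖c 0‖ < 1 := by
    have h1 := hs 0 (by norm_num)
    have h2 : HasSum (fun m => c m * (0:ℂ) ^ m) (c 0) := by
      convert hasSum_single (f := fun m => c m * (0:ℂ) ^ m) 0 ?_ using 1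
      · simp
      · intro b hb'
        simp [pow_eq_zero_iff, hb']
    have h3 := hb 0 (by norm_num)
    rwa [h1.unique h2] at h3
  set a : ℝ := ‖c 0‖ with ha_def
  have ha0 : 0 ≤ a := norm_nonneg _
  have hw : ∀ k, 1 ≤ k → ‖c k‖ ≤ 1 - a ^ 2 := fun k hk => wiener_bound c g hs hb k hk
  have hle1 : ∀ k, ‖c k‖ ≤ 1 := by
    intro k
    rcases Nat.eq_zero_or_pos k with rfl | hk
    · exact ha.le
    · exact (hw k hk).trans (by nlinarith)
  have hgeo : Summable (fun k : ℕ => ((3:ℝ)⁻¹) ^ k) :=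
    summable_geometric_of_lt_one (by norm_num) (by norm_num)
  have hsummable : Summable (fun k => ‖c k‖ * (3:ℝ)⁻¹ ^ k) := by
    apply Summable.of_nonneg_of_le (fun k => by positivity) (fun k => ?_) hgeo
    calc ‖c k‖ * (3:ℝ)⁻¹ ^ k ≤ 1 * (3:ℝ)⁻¹ ^ k :=
          mul_le_mul_of_nonneg_right (hle1 k) (by positivity)
      _ = (3:ℝ)⁻¹ ^ k := one_mul _
  refine ⟨hsummable, ?_⟩
  rw [Summable.tsum_eq_zero_add hsummable]
  have htail_sum : Summable (fun k : ℕ => ‖c (k+1)‖ * (3:ℝ)⁻¹ ^ (k+1)) := by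
    exact_mod_cast (summable_nat_add_iff 1).mpr hsummable
  have hgeo2 : Summable (fun k : ℕ => ((1 - a^2) * (3:ℝ)⁻¹) * (3:ℝ)⁻¹ ^ k) :=
    hgeo.mul_left _
  have hgeo2' : Summable (fun k : ℕ => (1 - a^2) * (3:ℝ)⁻¹ ^ (k+1)) := by
    refine hgeo2.congr fun k => ?_
    rw [pow_succ']
    ring
  have htail_le : ∑' k, ‖c (k+1)‖ * (3:ℝ)⁻¹ ^ (k+1)
      ≤ ∑' k : ℕ, (1 - a^2) * (3:ℝ)⁻¹ ^ (k+1) := by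
    apply Summable.tsum_le_tsum (fun k => ?_) htail_sum hgeo2'
    exact mul_le_mul_of_nonneg_right (hw (k+1) (by omega)) (by positivity)
  have hval : ∑' k : ℕ, (1 - a^2) * (3:ℝ)⁻¹ ^ (k+1)
      = (1 - a^2) * (3:ℝ)⁻¹ * (1 - (3:ℝ)⁻¹)⁻¹ := by
    have : ∀ k : ℕ, (1 - a^2) * (3:ℝ)⁻¹ ^ (k+1) = ((1 - a^2) * (3:ℝ)⁻¹) * (3:ℝ)⁻¹ ^ k := by
      intro k; rw [pow_succ']; ring
    rw [tsum_congr this, tsum_mul_left, tsum_geometric_of_lt_one (by norm_num) (by norm_num)]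
  rw [hval] at htail_le
  have h0 : ‖c 0‖ * (3:ℝ)⁻¹ ^ 0 = a := by rw [pow_zero, mul_one]
  rw [h0]
  nlinarith [sq_nonneg (1 - a)]

lemma eval_smul_of_isHomogeneous {n k : ℕ} {φ : MvPolynomial (Fin n) ℂ}
    (hφ : φ.IsHomogeneous k) (t : ℂ) (w : Fin n → ℂ) :
    MvPolynomial.eval (t • w) φ = t ^ k * MvPolynomial.eval w φ := by
  rw [MvPolynomial.eval_eq, MvPolynomial.eval_eq, Finset.mul_sum]
  apply Finset.sum_congr rfl
  intro d hd
  have hcoeff : MvPolynomial.coeff d φ ≠ 0 := MvPolynomial.mem_support_iff.mp hd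
  have hdeg : ∑ i ∈ d.support, d i = k := by
    have := hφ hcoeff
    rw [← this, Finsupp.weight_apply, Finsupp.sum]
    simp [mul_comm]
  have : ∏ i ∈ d.support, (t • w) i ^ d i = t ^ k * ∏ i ∈ d.support, w i ^ d i := by
    have h1 : ∀ i ∈ d.support, (t • w) i ^ d i = t ^ d i * w i ^ d i := by
      intro i _
      rw [Pi.smul_apply, smul_eq_mul, mul_pow]
    rw [Finset.prod_congr rfl h1, Finset.prod_mul_distrib, Finset.prod_pow_eq_pow_sum, hdeg]
  rw [this]
  ring

/-- Theorem 8, positive part: if `f = Σ P_k` on a complete circular domain `Q`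
(with `P_k` homogeneous of degree `k`) and `|f| < 1` on `Q`, then
`Σ |P_k(z)| < 1` on `(1/3)·Q`. -/
theorem bohr_homogeneous_expansion (n : ℕ) (Q : Set (Fin n → ℂ))
    (hQopen : IsOpen Q) (hQ0 : (0 : Fin n → ℂ) ∈ Q)
    (hQcirc : ∀ z ∈ Q, ∀ t : ℂ, ‖t‖ ≤ 1 → t • z ∈ Q)
    (P : ℕ → MvPolynomial (Fin n) ℂ) (hP : ∀ k, (P k).IsHomogeneous k)
    (f : (Fin n → ℂ) → ℂ)
    (hf : ∀ z ∈ Q, HasSum (fun k => MvPolynomial.eval z (P k)) (f z))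
    (hbound : ∀ z ∈ Q, ‖f z‖ < 1) :
    ∀ z ∈ (fun w : Fin n → ℂ => ((3 : ℝ)⁻¹ : ℝ) • w) '' Q,
      Summable (fun k => ‖MvPolynomial.eval z (P k)‖) ∧
      ∑' k, ‖MvPolynomial.eval z (P k)‖ < 1 := by
  rintro z ⟨w, hw, rfl⟩
  set c : ℕ → ℂ := fun k => MvPolynomial.eval w (P k) with hc_def
  have hs : ∀ t : ℂ, ‖t‖ ≤ 1 → HasSum (fun k => c k * t ^ k) (f (t • w)) := by
    intro t ht
    have hmem : t • w ∈ Q := hQcirc w hw t ht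
    have := hf (t • w) hmem
    refine this.congr_fun fun k => ?_
    rw [eval_smul_of_isHomogeneous (hP k) t w, hc_def, mul_comm]
  have hb : ∀ t : ℂ, ‖t‖ ≤ 1 → ‖f (t • w)‖ < 1 := fun t ht =>
    hbound _ (hQcirc w hw t ht)
  obtain ⟨hsum, hlt⟩ := bohr_scalar c _ hs hb
  have heq : (fun k => ‖MvPolynomial.eval (((3:ℝ)⁻¹ : ℝ) • w) (P k)‖)
      = fun k => ‖c k‖ * (3:ℝ)⁻¹ ^ k := by
    funext k
    have hsmul : ((3:ℝ)⁻¹ : ℝ) • w = (((3:ℝ)⁻¹ : ℝ) : ℂ) • w := by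
      funext i
      simp [Complex.real_smul]
    rw [hsmul, eval_smul_of_isHomogeneous (hP k) _ w, norm_mul, norm_pow,
      Complex.norm_real, Real.norm_eq_abs, abs_of_pos (by norm_num : (0:ℝ) < 3⁻¹), mul_comm]
  rw [heq]
  exact ⟨hsum, hlt⟩
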